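/- Suppose Assumptions TI, CONT and M0 hold, P(G=0, R=0) > 0, and μ₁₀(U₀) and μ₁₀(U₁) are P-integrable. Then the mean untreated outcome of control attritors is identified: E[Y₁(0) | G=0, R=0] = E[F_{Y₁|G=0,R=1}^{-1}(F_{Y₀|G=0,R=1}(Y₀)) | G=0, R=0]. (Key step in the proof of Proposition 2.) -/

import Mathlib

open MeasureTheory ProbabilityTheory

/-- Conditional CDF of `X` given the event `A`: `F_{X|A}(y) = P(X ≤ y | A)`. -/
noncomputable def cCDF {Ω : Type*} [MeasurableSpace Ω] (P : Measure Ω) (A : Set Ω)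
    (X : Ω → ℝ) (y : ℝ) : ℝ :=
  ((P[|A]) {ω | X ω ≤ y}).toReal

/-- Generalized inverse `F⁻¹(q) = inf {y ∈ ℝ : F(y) ≥ q}`. -/
noncomputable def ginv (F : ℝ → ℝ) (q : ℝ) : ℝ :=
  sInf {y : ℝ | q ≤ F y}

/-- Conditional expectation of `X` given the event `A`: `E[X·1_A]/P(A)`. -/
noncomputable def cExp {Ω : Type*} [MeasurableSpace Ω] (P : Measure Ω) (A : Set Ω)
    (X : Ω → ℝ) : ℝ :=
  (∫ ω in A, X ω ∂P) / (P A).toReal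

/-- Conditional probability of `B` given `A`: `P(B|A) = P(B ∩ A)/P(A)`. -/
noncomputable def condProb {Ω : Type*} [MeasurableSpace Ω] (P : Measure Ω)
    (A B : Set Ω) : ℝ :=
  (P (B ∩ A)).toReal / (P A).toReal

/-- **Key step in Proposition 2 (control attritors)**: under Assumptions TI, CONT and M0,
with `P(G=0, R=0) > 0` and integrability of `μ₁₀(U₀)` and `μ₁₀(U₁)`, the mean untreated
outcome of control attritors is identified:
`E[Y₁(0) | G=0, R=0] = E[F_{Y₁|G=0,R=1}⁻¹(F_{Y₀|G=0,R=1}(Y₀)) | G=0, R=0]`. -/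
theorem cic_prop2_control_attritors {Ω : Type*} [MeasurableSpace Ω]
    (P : Measure Ω) [IsProbabilityMeasure P]
    (U₀ U₁ : Ω → ℝ) (G R : Ω → Bool)
    (hU₀ : Measurable U₀) (hU₁ : Measurable U₁)
    (hG : Measurable G) (hR : Measurable R)
    (μ00 μ10 μ11 : ℝ → ℝ)
    -- observed outcomes
    (Y0 Y1 : Ω → ℝ)
    (hY0 : ∀ ω, Y0 ω = μ00 (U₀ ω))
    (hY1 : ∀ ω, Y1 ω = if G ω = true then μ11 (U₁ ω) else μ10 (U₁ ω))
    -- Assumption TI (time invariance)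
    (hTI : ∀ g r : Bool, 0 < P {ω | G ω = g ∧ R ω = r} →
      (P[|{ω | G ω = g ∧ R ω = r}]).map U₀ = (P[|{ω | G ω = g ∧ R ω = r}]).map U₁)
    -- Assumption CONT
    (hCONT : ∀ g : Bool, 0 < P {ω | G ω = g ∧ R ω = true} ∧
      Continuous (cCDF P {ω | G ω = g ∧ R ω = true} U₁) ∧
      StrictMono (cCDF P {ω | G ω = g ∧ R ω = true} U₁))
    -- Assumption M0
    (hμ00c : Continuous μ00) (hμ00 : StrictMono μ00)
    (hμ10c : Continuous μ10) (hμ10 : StrictMono μ10)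
    -- positive probability of control attritors
    (hpos : 0 < P {ω | G ω = false ∧ R ω = false})
    -- integrability
    (hI1 : Integrable (fun ω => μ10 (U₀ ω)) P)
    (hI2 : Integrable (fun ω => μ10 (U₁ ω)) P) :
    cExp P {ω | G ω = false ∧ R ω = false} (fun ω => μ10 (U₁ ω))
      = cExp P {ω | G ω = false ∧ R ω = false}
          (fun ω => ginv (cCDF P {ω | G ω = false ∧ R ω = true} Y1)
            (cCDF P {ω | G ω = false ∧ R ω = true} Y0 (Y0 ω))) := by
  classical
  set B : Set Ω := {ω | G ω = false ∧ R ω = true} with hBdef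
  set A : Set Ω := {ω | G ω = false ∧ R ω = false} with hAdef
  have hBm : MeasurableSet B := by
    have : B = G ⁻¹' {false} ∩ R ⁻¹' {true} := by ext ω; simp [hBdef]
    rw [this]
    exact (hG (measurableSet_singleton _)).inter (hR (measurableSet_singleton _))
  obtain ⟨hBpos, hΦc, hΦm⟩ := hCONT false
  have hBne : P B ≠ 0 := hBpos.ne'
  have hProbB : IsProbabilityMeasure (P[|B]) := cond_isProbabilityMeasure hBne
  -- Step 1: F_{U₀|B} = F_{U₁|B} from TI
  have hΦU0 : ∀ y, cCDF P B U₀ y = cCDF P B U₁ y := by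
    intro y
    have hmap := hTI false true hBpos
    have h0 : (P[|B]).map U₀ (Set.Iic y) = (P[|B]) (U₀ ⁻¹' Set.Iic y) :=
      Measure.map_apply hU₀ measurableSet_Iic
    have h1 : (P[|B]).map U₁ (Set.Iic y) = (P[|B]) (U₁ ⁻¹' Set.Iic y) :=
      Measure.map_apply hU₁ measurableSet_Iic
    have : (P[|B]) {ω | U₀ ω ≤ y} = (P[|B]) {ω | U₁ ω ≤ y} := by
      have := congrArg (fun ν : Measure ℝ => ν (Set.Iic y)) hmap
      exact h0.symm.trans (this.trans h1)
    simp [cCDF, this]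
  -- Step 2: F_{Y0|B}(Y0 ω) = F_{U₁|B}(U₀ ω)
  have hY0cdf : ∀ ω, cCDF P B Y0 (Y0 ω) = cCDF P B U₁ (U₀ ω) := by
    intro ω
    have hset : {ω' | Y0 ω' ≤ Y0 ω} = {ω' | U₀ ω' ≤ U₀ ω} := by
      ext ω'; simp [hY0, hμ00.le_iff_le]
    rw [← hΦU0]
    simp [cCDF, hset]
  -- Step 3: F_{Y1|B}(μ10 v) = F_{U₁|B}(v)
  have hY1cdf : ∀ v, cCDF P B Y1 (μ10 v) = cCDF P B U₁ v := by
    intro v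
    have hset : B ∩ {ω | Y1 ω ≤ μ10 v} = B ∩ {ω | U₁ ω ≤ v} := by
      ext ω
      simp only [Set.mem_inter_iff, Set.mem_setOf_eq, hBdef]
      constructor
      · rintro ⟨⟨hg, hr⟩, hle⟩
        refine ⟨⟨hg, hr⟩, ?_⟩
        rw [hY1 ω, hg] at hle
        simpa using (hμ10.le_iff_le.mp (by simpa using hle))
      · rintro ⟨⟨hg, hr⟩, hle⟩
        refine ⟨⟨hg, hr⟩, ?_⟩
        rw [hY1 ω, hg]
        simpa using hμ10.le_iff_le.mpr hle
    simp only [cCDF]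
    rw [cond_apply hBm, cond_apply hBm, hset]
  -- Step 4: monotone bound: y < μ10 v → F_{Y1|B}(y) ≤ F_{U₁|B}(v)
  have hmono : ∀ {y v : ℝ}, y < μ10 v → cCDF P B Y1 y ≤ cCDF P B U₁ v := by
    intro y v hyv
    have hsub : B ∩ {ω | Y1 ω ≤ y} ⊆ B ∩ {ω | U₁ ω ≤ v} := by
      rintro ω ⟨⟨hg, hr⟩, hle⟩
      refine ⟨⟨hg, hr⟩, ?_⟩
      simp only [Set.mem_setOf_eq] at hle ⊢
      rw [hY1 ω, hg] at hle
      simp only [Bool.false_eq_true, if_false] at hle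
      exact le_of_lt (hμ10.lt_iff_lt.mp (lt_of_le_of_lt hle hyv))
    have h1 : (P[|B]) {ω | Y1 ω ≤ y} ≤ (P[|B]) {ω | U₁ ω ≤ v} := by
      rw [cond_apply hBm, cond_apply hBm]
      exact mul_le_mul_right (measure_mono hsub) _
    exact ENNReal.toReal_mono (measure_ne_top _ _) h1
  -- Step 5: the generalized inverse inverts
  have hginv : ∀ u, ginv (cCDF P B Y1) (cCDF P B U₁ u) = μ10 u := by
    intro u
    have hmem : μ10 u ∈ {y | cCDF P B U₁ u ≤ cCDF P B Y1 y} := by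
      simp [Set.mem_setOf_eq, hY1cdf u]
    have hlb : ∀ y ∈ {y | cCDF P B U₁ u ≤ cCDF P B Y1 y}, μ10 u ≤ y := by
      intro y hy
      by_contra hcon
      push_neg at hcon
      have hcont : Filter.Tendsto μ10 (nhdsWithin u (Set.Iio u)) (nhds (μ10 u)) :=
        (hμ10c.tendsto u).mono_left nhdsWithin_le_nhds
      have hev : ∀ᶠ w in nhdsWithin u (Set.Iio u), y < μ10 w :=
        hcont.eventually (eventually_gt_nhds hcon)
      obtain ⟨w, hyw, hwu⟩ := (hev.and eventually_mem_nhdsWithin).exists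
      have h1 : cCDF P B Y1 y ≤ cCDF P B U₁ w := hmono hyw
      have h2 : cCDF P B U₁ w < cCDF P B U₁ u := hΦm hwu
      have h3 : cCDF P B U₁ u ≤ cCDF P B Y1 y := hy
      linarith
    exact le_antisymm (csInf_le ⟨μ10 u, hlb⟩ hmem) (le_csInf ⟨_, hmem⟩ hlb)
  -- Pointwise identity
  have hpt : (fun ω => ginv (cCDF P B Y1) (cCDF P B Y0 (Y0 ω)))
      = fun ω => μ10 (U₀ ω) := by
    funext ω; rw [hY0cdf ω, hginv]
  rw [hpt]
  -- Step 6: conditional expectations via TI on A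
  have hcExp : ∀ f : Ω → ℝ, cExp P A f = ∫ ω, f ω ∂(P[|A]) := by
    intro f
    simp only [cExp, ProbabilityTheory.cond, integral_smul_measure, ENNReal.toReal_inv,
      smul_eq_mul, div_eq_inv_mul]
  rw [hcExp, hcExp]
  have hmapA := hTI false false hpos
  rw [← integral_map hU₁.aemeasurable hμ10c.aestronglyMeasurable,
    ← integral_map hU₀.aemeasurable hμ10c.aestronglyMeasurable, hmapA]
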